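/- Let K be a field of characteristic zero, R = K[x,y,z], and let a ≥ b ≥ 2 be integers. Let G = R/(x^a, y^b − x^{b−1} z, z^2) and set k = ⌊(a+b−1)/2⌋. Then h_G(k) = 2b if a ≥ b+1, and h_G(k) = 2b−1 if a = b. Moreover, if a ≥ b+3, then h_G(k) = h_G(k−1). -/

import Mathlib

open MvPolynomial

/-- The degree-`i` graded component of `R/I`, i.e. the image in `R/I` of the
space of homogeneous polynomials of degree `i`. -/
noncomputable def grComponent (K : Type*) [Field K]
    (I : Ideal (MvPolynomial (Fin 3) K)) (i : ℕ) :
    Submodule K (MvPolynomial (Fin 3) K ⧸ I) :=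
  (MvPolynomial.homogeneousSubmodule (Fin 3) K i).map
    (Ideal.Quotient.mkₐ K I).toLinearMap

/-- The Hilbert function of `R/I`. -/
noncomputable def hilb (K : Type*) [Field K]
    (I : Ideal (MvPolynomial (Fin 3) K)) (i : ℕ) : ℕ :=
  Module.finrank K (grComponent K I i)

/-- `R/I` has the weak Lefschetz property: there is a linear form `L` such that
for every `i`, multiplication by `L` from `[R/I]_i` to `[R/I]_{i+1}` is
injective or surjective. -/
def hasWLP (K : Type*) [Field K] (I : Ideal (MvPolynomial (Fin 3) K)) : Prop :=
  ∃ L : MvPolynomial (Fin 3) K, L.IsHomogeneous 1 ∧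
    ∀ i : ℕ,
      (∀ u ∈ grComponent K I i, ∀ v ∈ grComponent K I i,
          Ideal.Quotient.mk I L * u = Ideal.Quotient.mk I L * v → u = v) ∨
      (∀ w ∈ grComponent K I (i + 1), ∃ u ∈ grComponent K I i,
          Ideal.Quotient.mk I L * u = w)

namespace Stmt6

open Finset AddMonoidAlgebra

variable {K : Type*} [Field K]

/-- the monomial x^i y^j z^e -/
noncomputable def mon (K : Type*) [Field K] (t : ℕ × ℕ × ℕ) : MvPolynomial (Fin 3) K :=
  X 0 ^ t.1 * X 1 ^ t.2.1 * X 2 ^ t.2.2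

/-- standard monomial exponents of degree d -/
def std (a b d : ℕ) : Finset (ℕ × ℕ × ℕ) :=
  ((range a) ×ˢ (range b) ×ˢ (range 2)).filter fun t => t.1 + t.2.1 + t.2.2 = d

lemma mem_std {a b d : ℕ} {t : ℕ × ℕ × ℕ} :
    t ∈ std a b d ↔ t.1 < a ∧ t.2.1 < b ∧ t.2.2 < 2 ∧ t.1 + t.2.1 + t.2.2 = d := by
  simp [std, Finset.mem_filter, and_assoc]

/-- substitution x ↦ x, y ↦ y, z ↦ x^{1-b} y^b into Laurent-in-x polynomials -/
noncomputable def phi (K : Type*) [Field K] (b : ℕ) :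
    MvPolynomial (Fin 3) K →ₐ[K] AddMonoidAlgebra K (ℤ × ℕ) :=
  aeval ![AddMonoidAlgebra.single ((1 : ℤ), (0 : ℕ)) 1,
    AddMonoidAlgebra.single ((0 : ℤ), (1 : ℕ)) 1,
    AddMonoidAlgebra.single ((1 - (b : ℤ)), b) 1]

def target (b : ℕ) (t : ℕ × ℕ × ℕ) : ℤ × ℕ :=
  ((t.1 : ℤ) + t.2.2 * (1 - (b : ℤ)), t.2.1 + t.2.2 * b)

lemma phi_mon (b : ℕ) (t : ℕ × ℕ × ℕ) :
    phi K b (mon K t) = AddMonoidAlgebra.single (target b t) 1 := by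
  obtain ⟨i, j, e⟩ := t
  simp only [mon, phi, map_mul, map_pow, aeval_X, Matrix.cons_val_zero, Matrix.cons_val_one,
    Matrix.head_cons, Matrix.cons_val_two, Matrix.tail_cons]
  rw [AddMonoidAlgebra.single_pow, AddMonoidAlgebra.single_pow, AddMonoidAlgebra.single_pow,
    AddMonoidAlgebra.single_mul_single, AddMonoidAlgebra.single_mul_single]
  rw [AddMonoidAlgebra.single_inj]
  left
  constructor
  · simp only [Prod.smul_mk, Prod.mk_add_mk, smul_eq_mul, nsmul_eq_mul, target, Prod.mk.injEq]
    constructor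
    · push_cast; ring
    · ring
  · simp

def Ok (b : ℕ) (s : ℤ × ℕ) : Prop := (1 - (b : ℤ)) * ((s.2 / b : ℕ) : ℤ) ≤ s.1

lemma ok_add {b : ℕ} (hb : 0 < b) {s t : ℤ × ℕ} (hs : Ok b s) (ht : Ok b t) :
    Ok b (s + t) := by
  have hdiv : s.2 / b + t.2 / b ≤ (s.2 + t.2) / b := by
    rw [Nat.le_div_iff_mul_le hb, add_mul]
    exact Nat.add_le_add (Nat.div_mul_le_self _ _) (Nat.div_mul_le_self _ _)
  have h1 : (1 - (b : ℤ)) * (((s.2 + t.2) / b : ℕ) : ℤ) ≤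
      (1 - (b : ℤ)) * ((s.2 / b + t.2 / b : ℕ) : ℤ) := by
    apply mul_le_mul_of_nonpos_left _ (by omega)
    exact_mod_cast hdiv
  have h2 : (1 - (b : ℤ)) * ((s.2 / b + t.2 / b : ℕ) : ℤ) ≤ s.1 + t.1 := by
    push_cast
    rw [mul_add]
    exact add_le_add hs ht
  exact le_trans h1 h2

lemma ok_phi {b : ℕ} (hb : 0 < b) (h : MvPolynomial (Fin 3) K) :
    ∀ s ∈ (phi K b h).coeff.support, Ok b s := by
  induction h using MvPolynomial.induction_on with
  | C r =>
    intro s hs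
    have : phi K b (C r) = AddMonoidAlgebra.single ((0:ℤ), (0:ℕ)) r := by
      simp only [phi, algHom_C]
      rfl
    rw [this, AddMonoidAlgebra.coeff_single] at hs
    have := Finsupp.support_single_subset hs
    simp only [Finset.mem_singleton] at this
    subst this
    simp [Ok]
  | add p q hp hq =>
    intro s hs
    rw [map_add, AddMonoidAlgebra.coeff_add] at hs
    rcases Finset.mem_union.mp (Finsupp.support_add hs) with h | h
    · exact hp s h
    · exact hq s h
  | mul_X p i hp =>
    intro s hs
    rw [map_mul] at hs
    have hmul := AddMonoidAlgebra.support_coeff_mul_subset _ _ hs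
    rw [Finset.mem_add] at hmul
    obtain ⟨u, hu, v, hv, rfl⟩ := hmul
    apply ok_add hb (hp u hu)
    have hokv : ∀ w : ℤ × ℕ, Ok b w →
        (phi K b (X i)).coeff.support ⊆ {w} → Ok b v := by
      intro w hw hsub
      have hv' := hsub hv
      simp only [Finset.mem_singleton] at hv'
      rwa [hv']
    fin_cases i
    · refine hokv ((1:ℤ), (0:ℕ)) ?_ ?_
      · simp [Ok]
      · simp only [phi, aeval_X, Matrix.cons_val_zero, AddMonoidAlgebra.coeff_single]
        exact Finsupp.support_single_subset
    · refine hokv ((0:ℤ), (1:ℕ)) ?_ ?_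
      · show (1 - (b : ℤ)) * ((1 / b : ℕ) : ℤ) ≤ 0
        rcases Nat.lt_or_ge 1 b with h | h
        · rw [Nat.div_eq_of_lt h]; simp
        · have hb1 : b = 1 := by omega
          subst hb1; simp
      · simp only [phi, aeval_X, Matrix.cons_val_one, Matrix.head_cons, AddMonoidAlgebra.coeff_single]
        exact Finsupp.support_single_subset
    · refine hokv ((1 - (b:ℤ)), b) ?_ ?_
      · show (1 - (b : ℤ)) * ((b / b : ℕ) : ℤ) ≤ 1 - (b:ℤ)
        rw [Nat.div_self hb]; simp
      · simp only [phi, aeval_X, Matrix.cons_val_two, Matrix.tail_cons, Matrix.head_cons,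
          AddMonoidAlgebra.coeff_single]
        exact Finsupp.support_single_subset

lemma coeff_mul_single (b : ℕ) (w : AddMonoidAlgebra K (ℤ × ℕ))
    (hw : ∀ s ∈ w.coeff.support, Ok b s) (g pt : ℤ × ℕ)
    (h : ∀ s : ℤ × ℕ, Ok b s → s + g ≠ pt) :
    (w * AddMonoidAlgebra.single g (1:K)).coeff pt = 0 := by
  by_contra hne
  have hpt : pt ∈ (w * AddMonoidAlgebra.single g (1:K)).coeff.support :=
    Finsupp.mem_support_iff.mpr hne
  have hmul := AddMonoidAlgebra.support_coeff_mul_subset _ _ hpt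
  rw [Finset.mem_add] at hmul
  obtain ⟨u, hu, v, hv, huv⟩ := hmul
  rw [AddMonoidAlgebra.coeff_single] at hv
  have hv' := Finsupp.support_single_subset hv
  simp only [Finset.mem_singleton] at hv'
  subst hv'
  exact h u (hw u hu) huv

lemma vanish_xa {a b : ℕ} (i j e : ℕ) (hi : i < a) (hj : j < b) (he : e < 2)
    (w : AddMonoidAlgebra K (ℤ × ℕ)) (hw : ∀ s ∈ w.coeff.support, Ok b s) :
    (w * AddMonoidAlgebra.single ((a : ℤ), (0 : ℕ)) (1:K)).coeff (target b (i, j, e)) = 0 := by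
  apply coeff_mul_single b w hw
  rintro ⟨s1, s2⟩ hok heq
  simp only [target, Prod.mk_add_mk, Prod.mk.injEq] at heq
  obtain ⟨h1, h2⟩ := heq
  simp only [add_zero] at h2
  subst h2
  have hdiv : (j + e * b) / b = e := by
    rw [Nat.add_mul_div_right _ _ (by omega : 0 < b), Nat.div_eq_of_lt hj, zero_add]
  have hok' : (1 - (b : ℤ)) * e ≤ s1 := by
    have := hok
    simp only [Ok, hdiv] at this
    exact this
  interval_cases e <;> push_cast at hok' h1 ⊢ <;> omega

lemma vanish_z2 {b : ℕ} (i j e : ℕ) (hj : j < b) (he : e < 2)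
    (w : AddMonoidAlgebra K (ℤ × ℕ)) (hw : ∀ s ∈ w.coeff.support, Ok b s) :
    (w * AddMonoidAlgebra.single ((2 : ℕ) • ((1 - (b:ℤ)), b)) (1:K)).coeff (target b (i, j, e)) = 0 := by
  apply coeff_mul_single b w hw
  rintro ⟨s1, s2⟩ hok heq
  simp only [target, Prod.smul_mk, Prod.mk_add_mk, Prod.mk.injEq, smul_eq_mul] at heq
  obtain ⟨h1, h2⟩ := heq
  interval_cases e <;> omega

lemma target_inj {a b d : ℕ} (hb : 0 < b) {t1 t2 : ℕ × ℕ × ℕ}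
    (h1 : t1 ∈ std a b d) (h2 : t2 ∈ std a b d) (h : target b t1 = target b t2) : t1 = t2 := by
  obtain ⟨i1, j1, e1⟩ := t1
  obtain ⟨i2, j2, e2⟩ := t2
  rw [mem_std] at h1 h2
  simp only [target, Prod.mk.injEq] at h
  obtain ⟨ha1, ha2⟩ := h
  obtain ⟨-, hj1, he1, -⟩ := h1
  obtain ⟨-, hj2, he2, -⟩ := h2
  have hee : e1 = e2 ∧ j1 = j2 := by
    interval_cases e1 <;> interval_cases e2 <;> simp_all <;> omega
  obtain ⟨rfl, rfl⟩ := hee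
  have : (i1 : ℤ) = i2 := by omega
  have : i1 = i2 := by exact_mod_cast this
  simp [this]

lemma phi_gen2 {b : ℕ} (hb : 1 ≤ b) :
    phi K b (X 1 ^ b - X 0 ^ (b - 1) * X 2) = 0 := by
  simp only [map_sub, map_mul, map_pow, phi, aeval_X, Matrix.cons_val_zero, Matrix.cons_val_one,
    Matrix.head_cons, Matrix.cons_val_two, Matrix.tail_cons]
  rw [AddMonoidAlgebra.single_pow, AddMonoidAlgebra.single_pow, AddMonoidAlgebra.single_mul_single]
  rw [sub_eq_zero]
  have hpair : b • ((0:ℤ), (1:ℕ)) = (b - 1) • ((1:ℤ), (0:ℕ)) + ((1 - (b:ℤ)), b) := by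
    simp only [Prod.smul_mk, Prod.mk_add_mk, smul_eq_mul, nsmul_eq_mul, Prod.mk.injEq]
    constructor
    · push_cast [hb]
      ring
    · omega
  rw [hpair]
  simp

lemma phi_genx {a b : ℕ} :
    phi K b ((X 0 : MvPolynomial (Fin 3) K) ^ a) = AddMonoidAlgebra.single ((a:ℤ), (0:ℕ)) 1 := by
  simp only [map_pow, phi, aeval_X, Matrix.cons_val_zero]
  rw [AddMonoidAlgebra.single_pow]
  simp

lemma phi_genz {b : ℕ} :
    phi K b ((X 2 : MvPolynomial (Fin 3) K) ^ 2) =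
      AddMonoidAlgebra.single ((2 : ℕ) • ((1 - (b:ℤ)), b)) 1 := by
  simp only [map_pow, phi, aeval_X, Matrix.cons_val_two, Matrix.tail_cons, Matrix.head_cons]
  rw [AddMonoidAlgebra.single_pow]
  norm_num

lemma lin_indep (a b : ℕ) (hb : 2 ≤ b) (d : ℕ) :
    LinearIndependent K (fun t : (std a b d : Finset (ℕ × ℕ × ℕ)) =>
      Ideal.Quotient.mkₐ K (Ideal.span
        {(X 0 : MvPolynomial (Fin 3) K) ^ a, X 1 ^ b - X 0 ^ (b - 1) * X 2, X 2 ^ 2})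
        (mon K t)) := by
  set I : Ideal (MvPolynomial (Fin 3) K) := Ideal.span
    {(X 0 : MvPolynomial (Fin 3) K) ^ a, X 1 ^ b - X 0 ^ (b - 1) * X 2, X 2 ^ 2} with hI
  rw [Fintype.linearIndependent_iff]
  intro g hg t0
  set p : MvPolynomial (Fin 3) K := ∑ t : (std a b d : Finset (ℕ × ℕ × ℕ)), g t • mon K t with hp
  have hpI : p ∈ I := by
    rw [← Ideal.Quotient.eq_zero_iff_mem]
    have : Ideal.Quotient.mk I p = Ideal.Quotient.mkₐ K I p := rfl
    rw [this, hp, map_sum]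
    simpa only [map_smul] using hg
  obtain ⟨A, z, hz, hpeq⟩ := Ideal.mem_span_insert.mp hpI
  obtain ⟨B, Cc, rfl⟩ := Ideal.mem_span_pair.mp hz
  have hphi : phi K b p =
      phi K b A * AddMonoidAlgebra.single ((a:ℤ), (0:ℕ)) 1
      + phi K b Cc * AddMonoidAlgebra.single ((2:ℕ) • ((1 - (b:ℤ)), b)) 1 := by
    rw [hpeq, map_add, map_mul, map_add, map_mul, map_mul, phi_genx, phi_gen2 (by omega), phi_genz]
    ring
  obtain ⟨⟨i, j, e⟩, hmem⟩ := t0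
  have hmem' := mem_std.mp hmem
  have hLHS : (phi K b p).coeff (target b (i, j, e)) = g ⟨(i, j, e), hmem⟩ := by
    rw [hp, map_sum, AddMonoidAlgebra.coeff_sum, Finset.sum_apply']
    rw [Finset.sum_eq_single (⟨(i, j, e), hmem⟩ : (std a b d : Finset (ℕ × ℕ × ℕ)))]
    · rw [map_smul, AddMonoidAlgebra.coeff_smul, Finsupp.smul_apply, phi_mon,
        AddMonoidAlgebra.coeff_single, Finsupp.single_apply, if_pos rfl]
      simp
    · intro t _ htne
      rw [map_smul, AddMonoidAlgebra.coeff_smul, Finsupp.smul_apply, phi_mon,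
        AddMonoidAlgebra.coeff_single, Finsupp.single_apply, if_neg, smul_zero]
      intro hteq
      exact htne (Subtype.ext (target_inj (show 0 < b by omega) t.2 hmem hteq))
    · intro habs
      exact absurd (Finset.mem_univ _) habs
  have hRHS : (phi K b p).coeff (target b (i, j, e)) = 0 := by
    rw [hphi, AddMonoidAlgebra.coeff_add, Finsupp.add_apply,
      vanish_xa i j e hmem'.1 hmem'.2.1 hmem'.2.2.1 _ (ok_phi (show 0 < b by omega) A),
      vanish_z2 i j e hmem'.2.1 hmem'.2.2.1 _ (ok_phi (show 0 < b by omega) Cc), add_zero]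
  rw [← hLHS, hRHS]

lemma reduce (a b : ℕ) (hb : 2 ≤ b) (d : ℕ) :
    ∀ j i e : ℕ, i + j + e = d →
    Ideal.Quotient.mkₐ K (Ideal.span
        {(X 0 : MvPolynomial (Fin 3) K) ^ a, X 1 ^ b - X 0 ^ (b - 1) * X 2, X 2 ^ 2})
        (X 0 ^ i * X 1 ^ j * X 2 ^ e) ∈
      Submodule.span K (Set.range fun t : (std a b d : Finset (ℕ × ℕ × ℕ)) =>
        Ideal.Quotient.mkₐ K (Ideal.span
          {(X 0 : MvPolynomial (Fin 3) K) ^ a, X 1 ^ b - X 0 ^ (b - 1) * X 2, X 2 ^ 2})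
          (mon K t)) := by
  set I : Ideal (MvPolynomial (Fin 3) K) := Ideal.span
    {(X 0 : MvPolynomial (Fin 3) K) ^ a, X 1 ^ b - X 0 ^ (b - 1) * X 2, X 2 ^ 2} with hI
  intro j
  induction j using Nat.strong_induction_on with
  | _ j IH =>
    intro i e hd
    by_cases hjb : b ≤ j
    · obtain ⟨j', rfl⟩ : ∃ j', j = j' + b := ⟨j - b, by omega⟩
      have key : (X 0 ^ i * X 1 ^ (j' + b) * X 2 ^ e : MvPolynomial (Fin 3) K)
          = (X 0 ^ i * X 1 ^ j' * X 2 ^ e) * (X 1 ^ b - X 0 ^ (b - 1) * X 2)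
            + X 0 ^ (i + (b - 1)) * X 1 ^ j' * X 2 ^ (e + 1) := by
        obtain ⟨b', rfl⟩ : ∃ b', b = b' + 1 := ⟨b - 1, by omega⟩
        simp only [Nat.add_sub_cancel]
        ring
      rw [key, map_add]
      have h0 : Ideal.Quotient.mkₐ K I
          ((X 0 ^ i * X 1 ^ j' * X 2 ^ e) * (X 1 ^ b - X 0 ^ (b - 1) * X 2)) = 0 := by
        rw [Ideal.Quotient.mkₐ_eq_mk, Ideal.Quotient.eq_zero_iff_mem]
        exact Ideal.mul_mem_left _ _ (Ideal.subset_span (by simp))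
      rw [h0, zero_add]
      exact IH j' (by omega) (i + (b - 1)) (e + 1) (by omega)
    · by_cases he2 : 2 ≤ e
      · have h0 : Ideal.Quotient.mkₐ K I (X 0 ^ i * X 1 ^ j * X 2 ^ e) = 0 := by
          rw [Ideal.Quotient.mkₐ_eq_mk, Ideal.Quotient.eq_zero_iff_mem]
          have : (X 0 ^ i * X 1 ^ j * X 2 ^ e : MvPolynomial (Fin 3) K)
              = (X 0 ^ i * X 1 ^ j * X 2 ^ (e - 2)) * X 2 ^ 2 := by
            obtain ⟨e', rfl⟩ : ∃ e', e = e' + 2 := ⟨e - 2, by omega⟩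
            simp only [Nat.add_sub_cancel]
            ring
          rw [this]
          exact Ideal.mul_mem_left _ _ (Ideal.subset_span (by simp))
        rw [h0]
        exact Submodule.zero_mem _
      · by_cases hia : a ≤ i
        · have h0 : Ideal.Quotient.mkₐ K I (X 0 ^ i * X 1 ^ j * X 2 ^ e) = 0 := by
            rw [Ideal.Quotient.mkₐ_eq_mk, Ideal.Quotient.eq_zero_iff_mem]
            have : (X 0 ^ i * X 1 ^ j * X 2 ^ e : MvPolynomial (Fin 3) K)
                = (X 0 ^ (i - a) * X 1 ^ j * X 2 ^ e) * X 0 ^ a := by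
              obtain ⟨i', rfl⟩ : ∃ i', i = i' + a := ⟨i - a, by omega⟩
              simp only [Nat.add_sub_cancel]
              ring
            rw [this]
            exact Ideal.mul_mem_left _ _ (Ideal.subset_span (by simp))
          rw [h0]
          exact Submodule.zero_mem _
        · apply Submodule.subset_span
          exact ⟨⟨(i, j, e), mem_std.mpr
            ⟨show i < a by omega, show j < b by omega, show e < 2 by omega, hd⟩⟩, rfl⟩

lemma span_eq (a b : ℕ) (hb : 2 ≤ b) (d : ℕ) :
    grComponent K (Ideal.span
        {(X 0 : MvPolynomial (Fin 3) K) ^ a, X 1 ^ b - X 0 ^ (b - 1) * X 2, X 2 ^ 2}) d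
    = Submodule.span K (Set.range fun t : (std a b d : Finset (ℕ × ℕ × ℕ)) =>
        Ideal.Quotient.mkₐ K (Ideal.span
          {(X 0 : MvPolynomial (Fin 3) K) ^ a, X 1 ^ b - X 0 ^ (b - 1) * X 2, X 2 ^ 2})
          (mon K t)) := by
  set I : Ideal (MvPolynomial (Fin 3) K) := Ideal.span
    {(X 0 : MvPolynomial (Fin 3) K) ^ a, X 1 ^ b - X 0 ^ (b - 1) * X 2, X 2 ^ 2} with hI
  apply le_antisymm
  · rintro w ⟨p, hp, rfl⟩
    rw [SetLike.mem_coe, mem_homogeneousSubmodule] at hp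
    rw [← support_sum_monomial_coeff p]
    rw [show ((Ideal.Quotient.mkₐ K I).toLinearMap : MvPolynomial (Fin 3) K →ₗ[K] _)
        (∑ v ∈ p.support, (monomial v) (coeff v p))
        = ∑ v ∈ p.support, Ideal.Quotient.mkₐ K I ((monomial v) (coeff v p)) from map_sum _ _ _]
    apply Submodule.sum_mem
    intro m hm
    have hdeg : m 0 + m 1 + m 2 = d := by
      have h := hp (MvPolynomial.mem_support_iff.mp hm)
      rw [Finsupp.weight_apply, Finsupp.sum_fintype _ _ (fun i => by simp),
        Fin.sum_univ_three] at h
      simpa using h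
    have hmono : (monomial m) (coeff m p)
        = coeff m p • (X 0 ^ m 0 * X 1 ^ m 1 * X 2 ^ m 2 : MvPolynomial (Fin 3) K) := by
      rw [monomial_eq, Finsupp.prod_fintype _ _ (fun i => pow_zero _), Fin.prod_univ_three,
        smul_eq_C_mul]
    rw [hmono, map_smul]
    exact Submodule.smul_mem _ _ (reduce a b hb d (m 1) (m 0) (m 2) hdeg)
  · rw [Submodule.span_le]
    rintro w ⟨t, rfl⟩
    refine ⟨mon K t, ?_, rfl⟩
    rw [SetLike.mem_coe, mem_homogeneousSubmodule]
    have ht := mem_std.mp t.2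
    have h1 : (mon K (t : ℕ × ℕ × ℕ)).IsHomogeneous ((t : ℕ × ℕ × ℕ).1 +
        (t : ℕ × ℕ × ℕ).2.1 + (t : ℕ × ℕ × ℕ).2.2) := by
      have hx : ((X 0 : MvPolynomial (Fin 3) K) ^ (t : ℕ × ℕ × ℕ).1).IsHomogeneous
          (t : ℕ × ℕ × ℕ).1 := by
        simpa using (isHomogeneous_X K (0 : Fin 3)).pow (t : ℕ × ℕ × ℕ).1
      have hy : ((X 1 : MvPolynomial (Fin 3) K) ^ (t : ℕ × ℕ × ℕ).2.1).IsHomogeneous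
          (t : ℕ × ℕ × ℕ).2.1 := by
        simpa using (isHomogeneous_X K (1 : Fin 3)).pow (t : ℕ × ℕ × ℕ).2.1
      have hz : ((X 2 : MvPolynomial (Fin 3) K) ^ (t : ℕ × ℕ × ℕ).2.2).IsHomogeneous
          (t : ℕ × ℕ × ℕ).2.2 := by
        simpa using (isHomogeneous_X K (2 : Fin 3)).pow (t : ℕ × ℕ × ℕ).2.2
      exact (hx.mul hy).mul hz
    rw [ht.2.2.2] at h1
    exact h1

lemma hilb_eq (a b : ℕ) (hb : 2 ≤ b) (d : ℕ) :
    hilb K (Ideal.span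
        {(X 0 : MvPolynomial (Fin 3) K) ^ a, X 1 ^ b - X 0 ^ (b - 1) * X 2, X 2 ^ 2}) d
      = (std a b d).card := by
  rw [hilb, span_eq a b hb d, finrank_span_eq_card (lin_indep a b hb d), Fintype.card_coe]

def Fd (a b c : ℕ) : Finset (ℕ × ℕ) :=
  ((range a) ×ˢ (range b)).filter fun p => p.1 + p.2 = c

lemma Fd_eq_image (a b c n : ℕ) (hn : ∀ j, j < b ∧ c - j < a ∧ j ≤ c ↔ j < n) :
    Fd a b c = (range n).image fun j => (c - j, j) := by
  ext ⟨i, j⟩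
  simp only [Fd, Finset.mem_filter, Finset.mem_product, Finset.mem_range, Finset.mem_image,
    Prod.mk.injEq]
  constructor
  · rintro ⟨⟨hi, hj⟩, hsum⟩
    exact ⟨j, (hn j).mp ⟨hj, by omega, by omega⟩, by omega, rfl⟩
  · rintro ⟨j', hj', h1, rfl⟩
    have := (hn j').mpr hj'
    exact ⟨⟨by omega, this.1⟩, by omega⟩

lemma Fd_card (a b c n : ℕ) (hn : ∀ j, j < b ∧ c - j < a ∧ j ≤ c ↔ j < n) :
    (Fd a b c).card = n := by
  rw [Fd_eq_image a b c n hn, Finset.card_image_of_injective _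
    (fun j1 j2 h => congrArg Prod.snd h), Finset.card_range]

lemma Fd_card_high (a b c : ℕ) (hb : 1 ≤ b) (hc1 : b - 1 ≤ c) (hc2 : c + 1 ≤ a) :
    (Fd a b c).card = b := by
  apply Fd_card
  intro j
  omega

lemma Fd_card_low (a b c : ℕ) (hc1 : c + 1 ≤ b) (hc2 : c + 1 ≤ a) :
    (Fd a b c).card = c + 1 := by
  apply Fd_card
  intro j
  omega

lemma std_card (a b d : ℕ) (hd : 1 ≤ d) :
    (std a b d).card = (Fd a b d).card + (Fd a b (d - 1)).card := by
  have hset : std a b d = ((Fd a b d).image fun p => (p.1, p.2, 0)) ∪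
      ((Fd a b (d - 1)).image fun p => (p.1, p.2, 1)) := by
    ext ⟨i, j, e⟩
    simp only [mem_std, Finset.mem_union, Finset.mem_image, Fd, Finset.mem_filter,
      Finset.mem_product, Finset.mem_range, Prod.mk.injEq]
    constructor
    · rintro ⟨hi, hj, he, hsum⟩
      interval_cases e
      · exact Or.inl ⟨(i, j), ⟨⟨hi, hj⟩, by omega⟩, rfl, rfl, rfl⟩
      · exact Or.inr ⟨(i, j), ⟨⟨hi, hj⟩, by omega⟩, rfl, rfl, rfl⟩
    · rintro (⟨⟨i', j'⟩, ⟨⟨hi, hj⟩, hs⟩, h1, h2, h3⟩ | ⟨⟨i', j'⟩, ⟨⟨hi, hj⟩, hs⟩, h1, h2, h3⟩) <;>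
        subst h1 <;> subst h2 <;> subst h3 <;> exact ⟨hi, hj, by omega, by omega⟩
  rw [hset, Finset.card_union_of_disjoint, Finset.card_image_of_injective,
    Finset.card_image_of_injective]
  · intro p q h
    simpa [Prod.ext_iff] using h
  · intro p q h
    simpa [Prod.ext_iff] using h
  · rw [Finset.disjoint_left]
    rintro ⟨i, j, e⟩ h1 h2
    simp only [Finset.mem_image, Prod.mk.injEq] at h1 h2
    obtain ⟨p, -, -, -, he0⟩ := h1
    obtain ⟨q, -, -, -, he1⟩ := h2
    omega

end Stmt6

theorem stmt_6 (K : Type*) [Field K] [CharZero K] (a b : ℕ)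
    (hb : 2 ≤ b) (hab : b ≤ a) :
    let I : Ideal (MvPolynomial (Fin 3) K) := Ideal.span
      {(X 0 : MvPolynomial (Fin 3) K) ^ a, X 1 ^ b - X 0 ^ (b - 1) * X 2, X 2 ^ 2}
    let k : ℕ := (a + b - 1) / 2
    ((b + 1 ≤ a → hilb K I k = 2 * b) ∧
     (a = b → hilb K I k = 2 * b - 1) ∧
     (b + 3 ≤ a → hilb K I k = hilb K I (k - 1))) := by
  intro I k
  have hIdef : I = Ideal.span
      {(X 0 : MvPolynomial (Fin 3) K) ^ a, X 1 ^ b - X 0 ^ (b - 1) * X 2, X 2 ^ 2} := rfl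
  have hkdef : k = (a + b - 1) / 2 := rfl
  refine ⟨?_, ?_, ?_⟩
  · intro ha
    rw [hIdef, Stmt6.hilb_eq a b hb k, Stmt6.std_card a b k (by omega),
      Stmt6.Fd_card_high a b k (by omega) (by omega) (by omega),
      Stmt6.Fd_card_high a b (k - 1) (by omega) (by omega) (by omega)]
    omega
  · intro ha
    rw [hIdef, Stmt6.hilb_eq a b hb k, Stmt6.std_card a b k (by omega),
      Stmt6.Fd_card_high a b k (by omega) (by omega) (by omega),
      Stmt6.Fd_card_low a b (k - 1) (by omega) (by omega)]
    omega
  · intro ha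
    rw [hIdef, Stmt6.hilb_eq a b hb k, Stmt6.hilb_eq a b hb (k - 1),
      Stmt6.std_card a b k (by omega), Stmt6.std_card a b (k - 1) (by omega),
      Stmt6.Fd_card_high a b k (by omega) (by omega) (by omega),
      Stmt6.Fd_card_high a b (k - 1) (by omega) (by omega) (by omega),
      Stmt6.Fd_card_high a b (k - 1 - 1) (by omega) (by omega) (by omega)]
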